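/- arXiv:1804.06037 — 2 statements merged into one kernel-verified Lean document; each statement's English description precedes it below -/
import Mathlib

section
/- A nonempty word w over a totally ordered alphabet is not a power of a strictly shorter word (i.e., w is primitive) if and only if the rotational orbit of w contains exactly one Lyndon word. -/
set_option linter.unusedSectionVars false

namespace LyndonAux

open List

variable {α : Type*} [LinearOrder α]

theorem lex_append_of_lex_of_len_le {a b : List α} (h : List.Lex (· < ·) a b)
    (hlen : b.length ≤ a.length) (c d : List α) : List.Lex (· < ·) (a ++ c) (b ++ d) := by
  induction h with
  | nil => simp at hlen
  | rel h => exact List.Lex.rel h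
  | cons h ih => exact List.Lex.cons (ih (by simpa using hlen))

theorem lt_append_or_prefix {s v : List α} (h : List.Lex (· < ·) s v) (z : List α) :
    List.Lex (· < ·) (s ++ z) v ∨ s <+: v := by
  induction h with
  | nil => exact Or.inr nil_prefix
  | rel h => exact Or.inl (List.Lex.rel h)
  | @cons a l1 l2 h ih =>
      rcases ih with h' | h'
      · exact Or.inl (List.Lex.cons h')
      · exact Or.inr (List.cons_prefix_cons.mpr ⟨rfl, h'⟩)

theorem prefix_le {s v : List α} (h : s <+: v) : s ≤ v := by
  obtain ⟨t, rfl⟩ := h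
  rcases eq_or_ne t [] with rfl | ht
  · simp
  · refine le_of_lt ?_
    show List.Lex (· < ·) s (s ++ t)
    induction s with
    | nil => cases t with
      | nil => exact absurd rfl ht
      | cons a l => exact List.Lex.nil
    | cons a l ih => exact List.Lex.cons ih

theorem le_cancel_left {s t u : List α} (h : s ++ t ≤ s ++ u) : t ≤ u := by
  by_contra hc
  push_neg at hc
  exact absurd (List.Lex.append_left _ hc s : s ++ u < s ++ t) (not_lt.mpr h)

theorem pow_rot_aux (a : α) (t : List α) : ∀ k : ℕ,
    (List.replicate k (a :: t)).flatten ++ [a] = a :: (List.replicate k (t ++ [a])).flatten := by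
  intro k
  induction k with
  | zero => simp
  | succ k ih => simp [List.replicate_succ, ih]

theorem rotate_one_pow {y : List α} (hy : y ≠ []) (k : ℕ) :
    ((List.replicate k y).flatten).rotate 1 = (List.replicate k (y.rotate 1)).flatten := by
  obtain ⟨a, t, rfl⟩ := List.exists_cons_of_ne_nil hy
  cases k with
  | zero => simp
  | succ k =>
    have h1 : (List.replicate (k+1) (a :: t)).flatten
        = a :: (t ++ (List.replicate k (a :: t)).flatten) := by simp [List.replicate_succ]
    rw [h1, show (1:ℕ) = 0 + 1 from rfl, List.rotate_cons_succ, List.rotate_zero]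
    have h2 : (a :: t).rotate 1 = t ++ [a] := by
      rw [show (1:ℕ) = 0 + 1 from rfl, List.rotate_cons_succ, List.rotate_zero]
    rw [h2, List.replicate_succ, List.flatten_cons, List.append_assoc, pow_rot_aux]
    simp

theorem rotate_pow {y : List α} (hy : y ≠ []) (k i : ℕ) :
    ((List.replicate k y).flatten).rotate i = (List.replicate k (y.rotate i)).flatten := by
  induction i with
  | zero => simp
  | succ i ih =>
    have hyi : y.rotate i ≠ [] := by simp [List.rotate_eq_nil_iff, hy]
    rw [← List.rotate_rotate, ih, rotate_one_pow hyi, List.rotate_rotate]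

theorem comm_pow : ∀ (n : ℕ) (u s : List α), u.length + s.length = n → u ≠ [] → s ≠ [] →
    u ++ s = s ++ u → ∃ (t : List α) (a b : ℕ), 1 ≤ a ∧ 1 ≤ b ∧
      u = (List.replicate a t).flatten ∧ s = (List.replicate b t).flatten := by
  intro n
  induction n using Nat.strong_induction_on with
  | _ n ih =>
    have key : ∀ u s : List α, u.length + s.length = n → u.length ≤ s.length → u ≠ [] → s ≠ [] →
        u ++ s = s ++ u → ∃ (t : List α) (a b : ℕ), 1 ≤ a ∧ 1 ≤ b ∧
        u = (List.replicate a t).flatten ∧ s = (List.replicate b t).flatten := by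
      intro u s hn hle hu hs h
      have hpre : u <+: s := by
        have h1 : (u ++ s).take u.length = u := by simp
        have h2 : (s ++ u).take u.length = s.take u.length := List.take_append_of_le_length hle
        rw [h] at h1
        rw [h2] at h1
        exact h1 ▸ List.take_prefix u.length s
      obtain ⟨r, rfl⟩ := hpre
      rcases eq_or_ne r [] with rfl | hr
      · exact ⟨u, 1, 1, le_refl 1, le_refl 1, by simp, by simp⟩
      · have h' : u ++ r = r ++ u := by
          have h2 : u ++ (u ++ r) = u ++ (r ++ u) := by
            rw [h]; simp [List.append_assoc]
          exact List.append_cancel_left h2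
        have hlt : u.length + r.length < n := by
          have hu' : 0 < u.length := List.length_pos_iff.mpr hu
          simp [← hn]; omega
        obtain ⟨t, a, b, ha, hb, h1, h2⟩ := ih _ hlt u r rfl hu hr h'
        exact ⟨t, a, a + b, ha, by omega, h1, by
          rw [h1, h2, ← List.flatten_append, ← List.replicate_add]⟩
    intro u s hn hu hs h
    rcases le_total u.length s.length with hle | hle
    · exact key u s hn hle hu hs h
    · obtain ⟨t, a, b, ha, hb, h1, h2⟩ := key s u (by omega) hle hs hu h.symm
      exact ⟨t, b, a, hb, ha, h2, h1⟩

end LyndonAux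

/-- A Lyndon word: a nonempty word strictly smaller (in lexicographic order)
than each of its proper nonempty suffixes (equivalently, than each of its
nontrivial rotations). -/
def IsLyndon {α : Type*} [LinearOrder α] (w : List α) : Prop :=
  w ≠ [] ∧ ∀ u v : List α, u ≠ [] → v ≠ [] → w = u ++ v → w < v

/-- A word is primitive if it is not a power `u^k` (`k ≥ 2`) of a word. -/
def IsPrimitiveWord {α : Type*} (w : List α) : Prop :=
  ¬ ∃ (u : List α) (k : ℕ), 2 ≤ k ∧ w = (List.replicate k u).flatten

namespace LyndonAux

open List

variable {α : Type*} [LinearOrder α]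

theorem no_lyndon_pow {x : List α} (hx : x ≠ []) {k : ℕ} (hk : 2 ≤ k) :
    ¬ IsLyndon ((List.replicate k x).flatten) := by
  rintro ⟨hne, hlyn⟩
  obtain ⟨m, rfl⟩ : ∃ m, k = m + 1 + 1 := ⟨k - 2, by omega⟩
  have hsplit : (List.replicate (m+1+1) x).flatten
      = (List.replicate (m+1) x).flatten ++ x := by
    rw [show List.replicate (m+1+1) x = List.replicate (m+1) x ++ [x] from List.replicate_succ', List.flatten_append]
    simp
  have hPne : (List.replicate (m+1) x).flatten ≠ [] := by
    simp [List.replicate_succ, hx]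
  have hlt : (List.replicate (m+1+1) x).flatten < x := hlyn _ x hPne hx hsplit
  have hpre : x <+: (List.replicate (m+1+1) x).flatten :=
    ⟨(List.replicate (m+1) x).flatten, by simp [List.replicate_succ]⟩
  exact absurd (lt_of_le_of_lt (prefix_le hpre) hlt) (lt_irrefl _)

theorem lyndon_lt_rot {v u s : List α} (h : IsLyndon v) (hu : u ≠ []) (hs : s ≠ [])
    (hsplit : v = u ++ s) : v < s ++ u := by
  have h1 : v < s := h.2 u s hu hs hsplit
  exact List.Lex.append_right _ u h1

theorem lyndon_rot_eq {v v' : List α} (h : IsLyndon v) (h' : IsLyndon v') (m : ℕ)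
    (hm : v' = v.rotate m) : v' = v := by
  have hn : 0 < v.length := List.length_pos_iff.mpr h.1
  rcases Nat.eq_zero_or_pos (m % v.length) with h0 | hpos
  · rw [hm, ← List.rotate_mod, h0, List.rotate_zero]
  · have hlt : m % v.length < v.length := Nat.mod_lt _ hn
    have hrot : v' = v.drop (m % v.length) ++ v.take (m % v.length) := by
      rw [hm, ← List.rotate_mod, List.rotate_eq_drop_append_take hlt.le]
    have htne : v.take (m % v.length) ≠ [] := by
      intro hcon
      have := congrArg List.length hcon
      rw [List.length_take] at this
      simp only [List.length_nil] at this
      omega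
    have hdne : v.drop (m % v.length) ≠ [] := by
      intro hcon
      have := congrArg List.length hcon
      simp at this
      omega
    have h1 : v < v' := by
      rw [hrot]
      exact lyndon_lt_rot h htne hdne (List.take_append_drop _ v).symm
    have h2 : v' < v := by
      have h3 := lyndon_lt_rot h' hdne htne hrot
      rwa [List.take_append_drop] at h3
    exact absurd (h1.trans h2) (lt_irrefl _)

end LyndonAux

/-- A nonempty word is primitive if and only if its rotational orbit contains
exactly one Lyndon word. -/
theorem primitive_iff_unique_lyndon_rotation {α : Type*} [LinearOrder α]
    (w : List α) (hw : w ≠ []) :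
    IsPrimitiveWord w ↔ ∃! v : List α, (∃ i : ℕ, v = w.rotate i) ∧ IsLyndon v := by
  constructor
  · intro hprim
    have hn : 0 < w.length := List.length_pos_iff.mpr hw
    obtain ⟨i, -, hmin⟩ := Finset.exists_min_image (Finset.range w.length)
      (fun i => w.rotate i) ⟨0, Finset.mem_range.mpr hn⟩
    set v := w.rotate i with hv
    have hmin' : ∀ j, v ≤ w.rotate j := by
      intro j
      rw [← List.rotate_mod w j]
      exact hmin _ (Finset.mem_range.mpr (Nat.mod_lt _ hn))
    have hminv : ∀ m, v ≤ v.rotate m := by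
      intro m
      rw [hv, List.rotate_rotate]
      exact hmin' _
    have hvne : v ≠ [] := by simp [hv, List.rotate_eq_nil_iff, hw]
    obtain ⟨p, hp⟩ := List.IsRotated.forall w i
    have hpw : v.rotate p = w := by rw [hv]; exact hp
    have hlyn : IsLyndon v := by
      refine ⟨hvne, ?_⟩
      intro u s hu hs hsplit
      by_contra hlt
      push_neg at hlt
      have hrotu : v.rotate u.length = s ++ u := by
        rw [hsplit, List.rotate_append_length_eq]
      have h1 : v ≤ s ++ u := hrotu ▸ hminv u.length
      have hsv : s ≠ v := by
        intro hc
        have h3 := congrArg List.length hsplit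
        rw [List.length_append, hc] at h3
        have := List.length_pos_iff.mpr hu
        omega
      have hslt : s < v := lt_of_le_of_ne hlt hsv
      rcases LyndonAux.lt_append_or_prefix hslt u with h2 | hpre
      · exact absurd h1 (not_le.mpr h2)
      · obtain ⟨t, hvst⟩ := hpre
        have hts : t ≤ u := LyndonAux.le_cancel_left (by rw [hvst]; exact h1)
        have hlen : t.length = u.length := by
          have h3 := congrArg List.length hsplit
          have h4 := congrArg List.length hvst
          simp at h3 h4
          omega
        have h5 : v ≤ t ++ s := by
          have h6 : v.rotate s.length = t ++ s := by
            rw [← hvst, List.rotate_append_length_eq]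
          exact h6 ▸ hminv s.length
        have htu : t = u := by
          rcases lt_or_eq_of_le hts with h6 | h6
          · have h7 : t ++ s < u ++ s :=
              LyndonAux.lex_append_of_lex_of_len_le h6 (le_of_eq hlen.symm) s s
            rw [← hsplit] at h7
            exact absurd (lt_of_le_of_lt h5 h7) (lt_irrefl _)
          · exact h6
        have hcomm : u ++ s = s ++ u := by rw [← hsplit, ← hvst, htu]
        obtain ⟨t', a, b, ha, hb, h7, h8⟩ :=
          LyndonAux.comm_pow (u.length + s.length) u s rfl hu hs hcomm
        have hvpow : v = (List.replicate (a+b) t').flatten := by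
          rw [hsplit, h7, h8, ← List.flatten_append, ← List.replicate_add]
        have ht'ne : t' ≠ [] := by
          intro hc
          rw [hc] at h7
          simp at h7
          exact hu h7
        refine hprim ⟨t'.rotate p, a+b, by omega, ?_⟩
        rw [← hpw, hvpow, LyndonAux.rotate_pow ht'ne]
    refine ⟨v, ⟨⟨i, hv⟩, hlyn⟩, ?_⟩
    rintro v' ⟨⟨j, hj⟩, hlyn'⟩
    refine LyndonAux.lyndon_rot_eq hlyn hlyn' (p + j) ?_
    rw [← List.rotate_rotate, hpw, ← hj]
  · intro h
    obtain ⟨v, ⟨⟨i, hvi⟩, hlyn⟩, -⟩ := h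
    rintro ⟨x, k, hk, hxk⟩
    have hx : x ≠ [] := by
      rintro rfl
      simp at hxk
      exact hw hxk
    have hvp : v = (List.replicate k (x.rotate i)).flatten := by
      rw [hvi, hxk, LyndonAux.rotate_pow hx]
    have hxr : x.rotate i ≠ [] := by simp [List.rotate_eq_nil_iff, hx]
    exact LyndonAux.no_lyndon_pow hxr hk (hvp ▸ hlyn)
end

section
/- The number of parking functions on n cars equals \((n+1)^{n-1}\). -/
/-- A function `f : {1,…,n} → {1,…,n}` (encoded with `Fin n`, so values are
shifted down by one) is a parking function iff for every `i ∈ {1,…,n}` at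
least `i` of its values are `≤ i`; equivalently, the nondecreasing
rearrangement `b₁ ≤ ⋯ ≤ b_n` of its values satisfies `b_i ≤ i`. -/
def IsParkingFunction {n : ℕ} (f : Fin n → Fin n) : Prop :=
  ∀ i : Fin n, (i : ℕ) + 1 ≤ (Finset.univ.filter fun j => f j ≤ i).card

open Finset

variable {n : ℕ}

/-- number of cars preferring spot `t` (mod `n+1`) -/
def cnt (g : Fin n → ZMod (n+1)) (t : ℕ) : ℕ :=
  (univ.filter fun j => g j = (t : ZMod (n+1))).card

lemma natCast_val_self (s : ZMod (n+1)) : ((s.val : ℕ) : ZMod (n+1)) = s :=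
  ZMod.natCast_rightInverse s

lemma cnt_congr (g : Fin n → ZMod (n+1)) {t t' : ℕ}
    (h : (t : ZMod (n+1)) = (t' : ZMod (n+1))) : cnt g t = cnt g t' := by
  unfold cnt; rw [h]

lemma sum_cnt (g : Fin n → ZMod (n+1)) (c : ℕ) :
    ∑ i ∈ range (n+1), cnt g (c + i) = n := by
  have key : (univ : Finset (Fin n)).card
      = ∑ i ∈ range (n+1), (univ.filter fun j => (g j - (c : ZMod (n+1))).val = i).card :=
    Finset.card_eq_sum_card_fiberwise (fun j _ => mem_range.2 (ZMod.val_lt _))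
  rw [Finset.card_univ, Fintype.card_fin] at key
  conv_rhs => rw [key]
  apply Finset.sum_congr rfl
  intro i hi
  rw [mem_range] at hi
  unfold cnt
  congr 1
  apply Finset.filter_congr
  intro j _
  constructor
  · intro h
    have h2 : g j - (c : ZMod (n+1)) = (i : ZMod (n+1)) := by
      push_cast at h; linear_combination h
    rw [h2, ZMod.val_cast_of_lt hi]
  · intro h
    have h2 : g j - (c : ZMod (n+1)) = (i : ZMod (n+1)) := by
      rw [← h, natCast_val_self]
    push_cast
    linear_combination h2

/-- lifted partial sums of (cnt - 1) -/
def TT (g : Fin n → ZMod (n+1)) (p : ℕ) : ℤ :=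
  ∑ i ∈ range p, ((cnt g i : ℤ) - 1)

lemma TT_sub (g : Fin n → ZMod (n+1)) (p k : ℕ) :
    TT g (p + k) - TT g p = ∑ i ∈ range k, ((cnt g (p + i) : ℤ) - 1) := by
  unfold TT; rw [Finset.sum_range_add]; ring

lemma TT_period (g : Fin n → ZMod (n+1)) (p : ℕ) :
    TT g (p + (n+1)) = TT g p - 1 := by
  have h := TT_sub g p (n+1)
  have h2 : ∑ i ∈ range (n+1), ((cnt g (p + i) : ℤ) - 1) = (n : ℤ) - (n+1) := by
    rw [Finset.sum_sub_distrib, Finset.sum_const, card_range]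
    have := sum_cnt g p
    have : ((∑ i ∈ range (n+1), cnt g (p + i) : ℕ) : ℤ) = (n : ℤ) := by rw [this]
    push_cast at this ⊢
    rw [this]; ring
  omega

def GoodT (g : Fin n → ZMod (n+1)) (p : ℕ) : Prop :=
  ∀ k ≤ n, TT g p ≤ TT g (p + k)

lemma goodT_period (g : Fin n → ZMod (n+1)) (p : ℕ) :
    GoodT g (p + (n+1)) ↔ GoodT g p := by
  unfold GoodT
  constructor <;> intro h k hk <;> have := h k hk
  · have e1 := TT_period g p
    have e2 := TT_period g (p + k)
    rw [show p + (n+1) + k = p + k + (n+1) by ring] at this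
    omega
  · have e1 := TT_period g p
    have e2 := TT_period g (p + k)
    rw [show p + (n+1) + k = p + k + (n+1) by ring]
    omega

lemma goodT_congr (g : Fin n → ZMod (n+1)) {p q : ℕ}
    (h : (p : ZMod (n+1)) = (q : ZMod (n+1))) : GoodT g p ↔ GoodT g q := by
  have hmod : p % (n+1) = q % (n+1) := by
    have := (ZMod.natCast_eq_natCast_iff p q (n+1)).1 h
    exact this
  have aux : ∀ r : ℕ, ∀ j : ℕ, (GoodT g (r + (n+1) * j) ↔ GoodT g r) := by
    intro r j
    induction j with
    | zero => simp
    | succ j ih =>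
      rw [show r + (n+1) * (j+1) = (r + (n+1) * j) + (n+1) by ring, goodT_period]
      exact ih
  have hp : GoodT g p ↔ GoodT g (p % (n+1)) := by
    conv_lhs => rw [show p = p % (n+1) + (n+1) * (p / (n+1)) from (Nat.mod_add_div p (n+1)).symm]
    exact aux _ _
  have hq : GoodT g q ↔ GoodT g (q % (n+1)) := by
    conv_lhs => rw [show q = q % (n+1) + (n+1) * (q / (n+1)) from (Nat.mod_add_div q (n+1)).symm]
    exact aux _ _
  rw [hp, hq, hmod]

lemma goodT_exists (g : Fin n → ZMod (n+1)) : ∃ p < n + 1, GoodT g p := by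
  classical
  have hex : ∃ p, p < n + 1 ∧ ∀ q ∈ range (n+1), TT g p ≤ TT g q := by
    obtain ⟨p, hp, hmin⟩ := Finset.exists_min_image (range (n+1)) (TT g) ⟨0, by simp⟩
    exact ⟨p, mem_range.1 hp, hmin⟩
  obtain ⟨p₀, ⟨hp₀r, hp₀min⟩, hleast⟩ :
      ∃ p₀, (p₀ < n + 1 ∧ ∀ q ∈ range (n+1), TT g p₀ ≤ TT g q) ∧
        ∀ r < p₀, ¬(r < n + 1 ∧ ∀ q ∈ range (n+1), TT g r ≤ TT g q) :=
    ⟨Nat.find hex, Nat.find_spec hex, fun r hr => Nat.find_min hex hr⟩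
  refine ⟨p₀, hp₀r, ?_⟩
  intro k hk
  by_cases hc : p₀ + k < n + 1
  · exact hp₀min _ (mem_range.2 hc)
  · have hr : p₀ + k - (n+1) < p₀ := by omega
    have hper := TT_period g (p₀ + k - (n+1))
    have heq2 : p₀ + k = (p₀ + k - (n+1)) + (n+1) := by omega
    rw [← heq2] at hper
    have hge : TT g p₀ ≤ TT g (p₀ + k - (n+1)) := hp₀min _ (mem_range.2 (by omega))
    have hne : TT g (p₀ + k - (n+1)) ≠ TT g p₀ := by
      intro heq
      refine hleast _ hr ⟨by omega, ?_⟩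
      intro q hq
      rw [heq]
      exact hp₀min q hq
    omega

lemma goodT_unique (g : Fin n → ZMod (n+1)) {p q : ℕ} (hpq : p ≤ q) (hqn : q ≤ p + n)
    (hp : GoodT g p) (hq : GoodT g q) : p = q := by
  by_contra hne
  have h1 : TT g p ≤ TT g q := by
    have := hp (q - p) (by omega)
    rwa [show p + (q - p) = q by omega] at this
  have h2 : TT g q ≤ TT g (p + (n+1)) := by
    have := hq (p + (n+1) - q) (by omega)
    rwa [show q + (p + (n+1) - q) = p + (n+1) by omega] at this
  have := TT_period g p
  omega

def Good (g : Fin n → ZMod (n+1)) (s : ZMod (n+1)) : Prop := GoodT g (s.val + 1)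

lemma castSucc_zero' : ((n + 1 : ℕ) : ZMod (n+1)) = 0 := ZMod.natCast_self (n+1)

lemma good_unique (g : Fin n → ZMod (n+1)) {s s' : ZMod (n+1)}
    (h : Good g s) (h' : Good g s') : s = s' := by
  have hs := ZMod.val_lt s
  have hs' := ZMod.val_lt s'
  apply ZMod.val_injective
  rcases le_total s.val s'.val with hle | hle
  · have := goodT_unique g (p := s.val + 1) (q := s'.val + 1) (by omega) (by omega) h h'
    omega
  · have := goodT_unique g (p := s'.val + 1) (q := s.val + 1) (by omega) (by omega) h' h
    omega

lemma existsUnique_good (g : Fin n → ZMod (n+1)) : ∃! s : ZMod (n+1), Good g s := by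
  obtain ⟨p, hp, hgp⟩ := goodT_exists g
  refine ⟨((p + n : ℕ) : ZMod (n+1)), ?_, fun s hs => good_unique g hs ?_⟩ <;>
  · show GoodT g (((p + n : ℕ) : ZMod (n+1)).val + 1)
    rw [goodT_congr g (q := p)]
    · exact hgp
    · push_cast [natCast_val_self]
      have h0 := castSucc_zero' (n := n)
      push_cast at h0
      linear_combination h0

lemma cnt_shift (g : Fin n → ZMod (n+1)) (c : ZMod (n+1)) (t : ℕ) :
    cnt (fun j => g j + c) t = cnt g (t + ((n+1) - c.val)) := by
  have hlt := ZMod.val_lt c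
  have hd : ((((n+1) - c.val : ℕ)) : ZMod (n+1)) = -c := by
    have e : (((n+1) - c.val : ℕ) + c.val : ℕ) = n + 1 := by omega
    have := congrArg (fun x : ℕ => (x : ZMod (n+1))) e
    push_cast [natCast_val_self, castSucc_zero'] at this
    have h0 := castSucc_zero' (n := n)
    push_cast at h0
    linear_combination this + h0
  unfold cnt
  congr 1
  apply Finset.filter_congr
  intro j _
  push_cast [hd]
  constructor
  · intro h; linear_combination h
  · intro h; linear_combination h

lemma goodT_shift (g : Fin n → ZMod (n+1)) (c : ZMod (n+1)) (p : ℕ) :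
    GoodT (fun j => g j + c) p ↔ GoodT g (p + ((n+1) - c.val)) := by
  set d := (n+1) - c.val with hd
  have key : ∀ k, TT (fun j => g j + c) (p + k) - TT (fun j => g j + c) p
      = TT g ((p + d) + k) - TT g (p + d) := by
    intro k
    rw [TT_sub, TT_sub]
    apply Finset.sum_congr rfl
    intro i _
    rw [cnt_shift, show p + i + d = p + d + i by ring]
  constructor <;> intro h k hk <;> have h2 := h k hk <;> have h3 := key k <;> omega

lemma good_shift (g : Fin n → ZMod (n+1)) (c s : ZMod (n+1)) :
    Good (fun j => g j + c) (s + c) ↔ Good g s := by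
  unfold Good
  rw [goodT_shift]
  apply goodT_congr
  have hlt := ZMod.val_lt c
  have e : (((n+1) - c.val : ℕ) + c.val : ℕ) = n + 1 := by omega
  have hcast := congrArg (fun x : ℕ => (x : ZMod (n+1))) e
  have h0 := castSucc_zero' (n := n)
  push_cast [natCast_val_self] at hcast h0 ⊢
  linear_combination hcast + h0

lemma sum_cnt_lt (g : Fin n → ZMod (n+1)) {k : ℕ} (hk : k ≤ n + 1) :
    ∑ i ∈ range k, cnt g i = (univ.filter fun j => (g j).val < k).card := by
  have key : (univ.filter fun j => (g j).val < k).card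
      = ∑ i ∈ range k, ((univ.filter fun j => (g j).val < k).filter
          (fun j => (g j).val = i)).card :=
    Finset.card_eq_sum_card_fiberwise (by
      intro j hj
      rw [Finset.mem_coe, mem_filter] at hj
      exact Finset.mem_coe.2 (mem_range.2 hj.2))
  rw [key]
  apply Finset.sum_congr rfl
  intro i hi
  rw [mem_range] at hi
  rw [Finset.filter_filter]
  unfold cnt
  congr 1
  apply Finset.filter_congr
  intro j _
  constructor
  · intro h
    have hv : (g j).val = i := by rw [h, ZMod.val_cast_of_lt (by omega)]
    exact ⟨by omega, hv⟩
  · intro h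
    rw [← h.2, natCast_val_self]

lemma good_n_iff (g : Fin n → ZMod (n+1)) :
    Good g ((n : ℕ) : ZMod (n+1)) ↔
      ∀ k ≤ n, k ≤ (univ.filter fun j => (g j).val < k).card := by
  have h1 : Good g ((n : ℕ) : ZMod (n+1)) ↔ GoodT g 0 := by
    show GoodT g (((n : ℕ) : ZMod (n+1)).val + 1) ↔ _
    rw [ZMod.val_cast_of_lt (by omega)]
    apply goodT_congr
    push_cast [castSucc_zero']
    have h0 := castSucc_zero' (n := n)
    push_cast at h0
    linear_combination h0
  rw [h1]
  unfold GoodT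
  constructor <;> intro h k hk <;> have h2 := h k hk
  · have h3 : TT g (0 + k) = (∑ i ∈ range k, (cnt g i : ℤ)) - k := by
      unfold TT
      rw [Finset.sum_sub_distrib, Finset.sum_const, card_range]
      simp
    have h4 : TT g 0 = 0 := by unfold TT; simp
    rw [← sum_cnt_lt g (by omega : k ≤ n + 1)]
    have : ((∑ i ∈ range k, cnt g i : ℕ) : ℤ) = ∑ i ∈ range k, (cnt g i : ℤ) := by
      push_cast; ring
    omega
  · have h3 : TT g (0 + k) = (∑ i ∈ range k, (cnt g i : ℤ)) - k := by
      unfold TT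
      rw [Finset.sum_sub_distrib, Finset.sum_const, card_range]
      simp
    have h4 : TT g 0 = 0 := by unfold TT; simp
    rw [← sum_cnt_lt g (by omega : k ≤ n + 1)] at h2
    have : ((∑ i ∈ range k, cnt g i : ℕ) : ℤ) = ∑ i ∈ range k, (cnt g i : ℤ) := by
      push_cast; ring
    omega

/-- embed an `Fin n`-valued function into `ZMod (n+1)` -/
def liftPF (f : Fin n → Fin n) : Fin n → ZMod (n+1) := fun j => ((f j : ℕ) : ZMod (n+1))

lemma liftPF_val (f : Fin n → Fin n) (j : Fin n) : (liftPF f j).val = (f j : ℕ) :=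
  ZMod.val_cast_of_lt (by have := (f j).isLt; omega)

lemma parking_iff (f : Fin n → Fin n) :
    IsParkingFunction f ↔ Good (liftPF f) ((n : ℕ) : ZMod (n+1)) := by
  rw [good_n_iff]
  have hfilter : ∀ k : ℕ, (univ.filter fun j => (liftPF f j).val < k)
      = (univ.filter fun j => (f j : ℕ) < k) := by
    intro k
    apply Finset.filter_congr
    intro j _
    rw [liftPF_val]
  constructor
  · intro hpf k hk
    rcases Nat.eq_zero_or_pos k with rfl | hkpos
    · omega
    · have hi : k - 1 < n := by omega
      have := hpf ⟨k - 1, hi⟩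
      rw [hfilter]
      have heq : (univ.filter fun j => f j ≤ (⟨k - 1, hi⟩ : Fin n))
          = (univ.filter fun j => (f j : ℕ) < k) := by
        apply Finset.filter_congr
        intro j _
        rw [Fin.le_def]
        simp only
        omega
      rw [heq] at this
      have hval : ((⟨k - 1, hi⟩ : Fin n) : ℕ) = k - 1 := rfl
      omega
  · intro h i
    have hk : (i : ℕ) + 1 ≤ n := by have := i.isLt; omega
    have := h ((i : ℕ) + 1) hk
    rw [hfilter] at this
    have heq : (univ.filter fun j => (f j : ℕ) < (i : ℕ) + 1)
        = (univ.filter fun j => f j ≤ i) := by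
      apply Finset.filter_congr
      intro j _
      rw [Fin.le_def]
      omega
    rw [heq] at this
    exact this

lemma good_n_val_lt {g : Fin n → ZMod (n+1)} (hg : Good g ((n : ℕ) : ZMod (n+1)))
    (j : Fin n) : (g j).val < n := by
  rw [good_n_iff] at hg
  have h := hg n le_rfl
  have hcard : (univ.filter fun j => (g j).val < n).card ≤ (univ : Finset (Fin n)).card :=
    Finset.card_filter_le _ _
  rw [Finset.card_univ, Fintype.card_fin] at hcard
  have huniv : (univ.filter fun j => (g j).val < n) = univ := by
    apply Finset.eq_univ_of_card
    rw [Fintype.card_fin]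
    omega
  have := Finset.mem_filter.1 (huniv ▸ Finset.mem_univ j)
  exact this.2

noncomputable def emptySpot (g : Fin n → ZMod (n+1)) : ZMod (n+1) :=
  (existsUnique_good g).choose

lemma emptySpot_good (g : Fin n → ZMod (n+1)) : Good g (emptySpot g) :=
  (existsUnique_good g).choose_spec.1

lemma good_iff_emptySpot (g : Fin n → ZMod (n+1)) {s : ZMod (n+1)} :
    Good g s ↔ emptySpot g = s :=
  ⟨fun h => good_unique g (emptySpot_good g) h, fun h => h ▸ emptySpot_good g⟩

lemma card_fiber_const (s s' : ZMod (n+1)) :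
    (univ.filter fun g : Fin n → ZMod (n+1) => emptySpot g = s).card
      = (univ.filter fun g : Fin n → ZMod (n+1) => emptySpot g = s').card := by
  apply Finset.card_bij' (fun g _ => fun j => g j + (s' - s))
    (fun g _ => fun j => g j + (s - s'))
  · intro g hg
    rw [mem_filter] at hg ⊢
    refine ⟨mem_univ _, ?_⟩
    have hgood : Good g s := (good_iff_emptySpot g).2 hg.2
    have := (good_shift g (s' - s) s).2 hgood
    rw [show s + (s' - s) = s' by ring] at this
    exact (good_iff_emptySpot _).1 this
  · intro g hg
    rw [mem_filter] at hg ⊢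
    refine ⟨mem_univ _, ?_⟩
    have hgood : Good g s' := (good_iff_emptySpot g).2 hg.2
    have := (good_shift g (s - s') s').2 hgood
    rw [show s' + (s - s') = s by ring] at this
    exact (good_iff_emptySpot _).1 this
  · intro g _; funext j; ring
  · intro g _; funext j; ring

/-- The number of parking functions on `n` cars equals `(n+1)^(n-1)`. -/
theorem card_parkingFunctions (n : ℕ) (hn : 0 < n) :
    Nat.card {f : Fin n → Fin n // IsParkingFunction f} = (n + 1) ^ (n - 1) := by
  have hequiv : {f : Fin n → Fin n // IsParkingFunction f} ≃
      {g : Fin n → ZMod (n+1) // emptySpot g = ((n : ℕ) : ZMod (n+1))} := by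
    refine Equiv.ofBijective
      (fun fp => ⟨liftPF fp.1, (good_iff_emptySpot _).1 ((parking_iff fp.1).1 fp.2)⟩)
      ⟨?_, ?_⟩
    · rintro ⟨f, hf⟩ ⟨f', hf'⟩ h
      simp only [Subtype.mk.injEq] at h ⊢
      funext j
      have hj := congrFun h j
      unfold liftPF at hj
      have hv := congrArg ZMod.val hj
      rw [ZMod.val_cast_of_lt (by have := (f j).isLt; omega),
        ZMod.val_cast_of_lt (by have := (f' j).isLt; omega)] at hv
      exact Fin.ext hv
    · rintro ⟨g, hg⟩
      have hgood : Good g ((n : ℕ) : ZMod (n+1)) := (good_iff_emptySpot _).2 hg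
      have hlift : liftPF (fun j => (⟨(g j).val, good_n_val_lt hgood j⟩ : Fin n)) = g := by
        funext j
        unfold liftPF
        exact natCast_val_self (g j)
      refine ⟨⟨fun j => ⟨(g j).val, good_n_val_lt hgood j⟩, ?_⟩, ?_⟩
      · rw [parking_iff, hlift]
        exact hgood
      · apply Subtype.ext
        exact hlift
  rw [Nat.card_congr hequiv, Nat.card_eq_fintype_card, Fintype.card_subtype]
  have hsum : (n+1)^n
      = ∑ s : ZMod (n+1), (univ.filter fun g : Fin n → ZMod (n+1) => emptySpot g = s).card := by
    have h := Finset.card_eq_sum_card_fiberwise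
      (f := emptySpot) (s := (univ : Finset (Fin n → ZMod (n+1)))) (t := univ)
      (fun g _ => mem_univ _)
    rw [Finset.card_univ, Fintype.card_fun, ZMod.card, Fintype.card_fin] at h
    exact h
  rw [Finset.sum_congr rfl (fun s _ => card_fiber_const s ((n : ℕ) : ZMod (n+1))),
    Finset.sum_const, Finset.card_univ, ZMod.card, smul_eq_mul] at hsum
  obtain ⟨m, rfl⟩ : ∃ m, n = m + 1 := ⟨n - 1, (Nat.succ_pred_eq_of_pos hn).symm⟩
  rw [pow_succ'] at hsum
  rw [Nat.add_sub_cancel]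
  exact (Nat.eq_of_mul_eq_mul_left (by omega) hsum.symm)
end
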